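/- arXiv:2007.02582 — 7 statements merged into one kernel-verified Lean document; each statement's English description precedes it below -/
import Mathlib

section
/- With 𝔏 = W ⋉ (𝔤 ⊗ ℂ[t,t⁻¹]) as above, the subspace 𝔞_0 = (t-1)W ⋉ (𝔤 ⊗ ℂ[t,t⁻¹]) is a Lie subalgebra of 𝔏, and for each k ∈ ℤ≥0, 𝔞_k = (t-1)^{k+1} W ⋉ (𝔤 ⊗ (t-1)^k ℂ[t,t⁻¹]) is an ideal of 𝔞_0. -/
/-!
STATEMENT 3: With `𝔏 = W ⋉ (𝔤 ⊗ ℂ[t,t⁻¹])`, the subspace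
`𝔞_0 = (t-1)W ⋉ (𝔤 ⊗ ℂ[t,t⁻¹])` is a Lie subalgebra of `𝔏`, and for each
`k ∈ ℤ≥0`, `𝔞_k = (t-1)^{k+1}W ⋉ (𝔤 ⊗ (t-1)^k ℂ[t,t⁻¹])` is an ideal of `𝔞_0`.

Abstract faithful model: `L` is a Lie algebra over ℂ with elements
`d i` (Witt basis), `x s j = x_s ⊗ t^j`, satisfying the defining brackets of
`𝔏`; the bracket on `𝔤` is encoded by structure constants
`c : S → S → (S →₀ ℂ)` with `[x_s, x_p] = ∑_q (c s p) q · x_q`.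
`𝔞_k` is the span of the elements `(t-1)^{k+1} d_i` and `(t-1)^k x_s(j)`.
-/

variable {L : Type*} [LieRing L] [LieAlgebra ℂ L] {S : Type*}

/-- `(t-1)^k d_i`, expanded in the basis `{d_n}`. -/
noncomputable def td (d : ℤ → L) (k : ℕ) (i : ℤ) : L :=
  ∑ r ∈ Finset.range (k + 1), ((-1 : ℂ) ^ (k - r) * (k.choose r : ℂ)) • d (i + r)

/-- `(t-1)^k x_s(j)`, expanded in the basis `{x_s(n)}`. -/
noncomputable def tx (x : S → ℤ → L) (k : ℕ) (s : S) (j : ℤ) : L :=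
  ∑ r ∈ Finset.range (k + 1), ((-1 : ℂ) ^ (k - r) * (k.choose r : ℂ)) • x s (j + r)

/-- The subspace `𝔞_k = (t-1)^{k+1} W ⋉ (𝔤 ⊗ (t-1)^k ℂ[t,t⁻¹])`. -/
noncomputable def aSub (d : ℤ → L) (x : S → ℤ → L) (k : ℕ) : Submodule ℂ L :=
  Submodule.span ℂ
    ((Set.range fun i : ℤ => td d (k + 1) i) ∪
      (Set.range fun p : S × ℤ => tx x k p.1 p.2))

private lemma signfix (k r : ℕ) (h : r ≤ k) : ((-1:ℂ)) ^ (k - r) = (-1) ^ (k + r) := by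
  have hh : k + r = (k - r) + 2 * r := by omega
  rw [hh, pow_add, pow_mul, neg_one_sq, one_pow, mul_one]

private lemma pascal_core {M : Type*} [AddCommGroup M] [Module ℂ M] (f : ℤ → M) (k : ℕ) (i : ℤ) :
    (∑ r ∈ Finset.range (k+1), ((-1:ℂ)^(k+r) * (k.choose (r+1):ℂ)) • f (i+1+r))
      + ((-1:ℂ)^(k+1)) • f i
    = - ∑ r ∈ Finset.range (k+1), ((-1:ℂ)^(k+r) * (k.choose r:ℂ)) • f (i+r) := by
  rw [Finset.sum_range_succ,
    Finset.sum_range_succ' (fun r => ((-1:ℂ)^(k+r) * (k.choose r:ℂ)) • f (i+r)) k]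
  have hb : ∀ r ∈ Finset.range k,
      ((-1:ℂ)^(k+(r+1)) * (k.choose (r+1):ℂ)) • f (i+(((r:ℕ):ℤ)+1))
        = -(((-1:ℂ)^(k+r) * (k.choose (r+1):ℂ)) • f (i+1+r)) := by
    intro r _
    have h1 : (-1:ℂ)^(k+(r+1)) = -((-1:ℂ)^(k+r)) := by
      rw [show k+(r+1) = (k+r)+1 by omega, pow_succ]; ring
    have h2 : i+(((r:ℕ):ℤ)+1) = i+1+(r:ℤ) := by ring
    rw [h1, h2, neg_mul, neg_smul]
  push_cast
  rw [Finset.sum_congr rfl hb]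
  simp [Nat.choose_succ_self, pow_succ]
  abel

private lemma pascal_sum {M : Type*} [AddCommGroup M] [Module ℂ M] (f : ℤ → M) (k : ℕ) (i : ℤ) :
    (∑ r ∈ Finset.range (k + 1 + 1), ((-1 : ℂ) ^ (k + 1 - r) * ((k + 1).choose r : ℂ)) • f (i + r))
      = (∑ r ∈ Finset.range (k + 1), ((-1 : ℂ) ^ (k - r) * (k.choose r : ℂ)) • f (i + 1 + r))
        - ∑ r ∈ Finset.range (k + 1), ((-1 : ℂ) ^ (k - r) * (k.choose r : ℂ)) • f (i + r) := by
  have e1 : (∑ r ∈ Finset.range (k + 1 + 1),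
        ((-1 : ℂ) ^ (k + 1 - r) * ((k + 1).choose r : ℂ)) • f (i + r))
      = ∑ r ∈ Finset.range (k + 1 + 1),
        ((-1 : ℂ) ^ (k + 1 + r) * ((k + 1).choose r : ℂ)) • f (i + r) := by
    refine Finset.sum_congr rfl fun r hr => ?_
    rw [signfix (k+1) r (Nat.lt_succ_iff.mp (Finset.mem_range.mp hr))]
  have e2 : ∀ j : ℤ, (∑ r ∈ Finset.range (k + 1),
        ((-1 : ℂ) ^ (k - r) * (k.choose r : ℂ)) • f (j + r))
      = ∑ r ∈ Finset.range (k + 1),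
        ((-1 : ℂ) ^ (k + r) * (k.choose r : ℂ)) • f (j + r) := by
    intro j
    refine Finset.sum_congr rfl fun r hr => ?_
    rw [signfix k r (Nat.lt_succ_iff.mp (Finset.mem_range.mp hr))]
  rw [e1, e2, e2]
  rw [Finset.sum_range_succ']
  have e3 : ∀ r : ℕ, ((-1 : ℂ) ^ (k + 1 + (r + 1)) * ((k + 1).choose (r + 1) : ℂ)) • f (i + ((r : ℤ) + 1))
      = ((-1 : ℂ) ^ (k + r) * (k.choose r : ℂ)) • f (i + 1 + r)
        + ((-1 : ℂ) ^ (k + r) * (k.choose (r + 1) : ℂ)) • f (i + 1 + r) := by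
    intro r
    have h1 : ((-1 : ℂ)) ^ (k + 1 + (r + 1)) = (-1) ^ (k + r) := by
      have : k + 1 + (r + 1) = (k + r) + 2 := by omega
      rw [this, pow_add, neg_one_sq, mul_one]
    have h2 : (i + ((r : ℤ) + 1)) = i + 1 + r := by ring
    rw [h1, h2, Nat.choose_succ_succ, Nat.cast_add, mul_add, add_smul]
  simp only [Nat.cast_add, Nat.cast_one] at *
  calc (∑ r ∈ Finset.range (k + 1),
          ((-1 : ℂ) ^ (k + 1 + (r + 1)) * ((k + 1).choose (r + 1) : ℂ)) • f (i + ((r:ℤ) + 1)))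
        + ((-1 : ℂ) ^ (k + 1 + 0) * ((k + 1).choose 0 : ℂ)) • f (i + (0:ℕ))
      = (∑ r ∈ Finset.range (k + 1),
          (((-1 : ℂ) ^ (k + r) * (k.choose r : ℂ)) • f (i + 1 + r)
            + ((-1 : ℂ) ^ (k + r) * (k.choose (r + 1) : ℂ)) • f (i + 1 + r)))
        + ((-1 : ℂ) ^ (k + 1) ) • f i := by
        rw [Finset.sum_congr rfl fun r _ => e3 r]
        norm_num
    _ = (∑ r ∈ Finset.range (k + 1), ((-1 : ℂ) ^ (k + r) * (k.choose r : ℂ)) • f (i + 1 + r))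
        + ((∑ r ∈ Finset.range (k + 1), ((-1 : ℂ) ^ (k + r) * (k.choose (r + 1) : ℂ)) • f (i + 1 + r))
          + ((-1 : ℂ) ^ (k + 1)) • f i) := by
        rw [Finset.sum_add_distrib]; ring_nf; abel
    _ = (∑ r ∈ Finset.range (k + 1), ((-1 : ℂ) ^ (k + r) * (k.choose r : ℂ)) • f (i + 1 + r))
        - ∑ r ∈ Finset.range (k + 1), ((-1 : ℂ) ^ (k + r) * (k.choose r : ℂ)) • f (i + r) := by
        rw [pascal_core f k i, ← sub_eq_add_neg]

lemma td_succ (d : ℤ → L) (k : ℕ) (i : ℤ) : td d (k+1) i = td d k (i+1) - td d k i :=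
  pascal_sum d k i

lemma tx_succ (x : S → ℤ → L) (k : ℕ) (s : S) (j : ℤ) :
    tx x (k+1) s j = tx x k s (j+1) - tx x k s j :=
  pascal_sum (x s) k j

lemma td_zero (d : ℤ → L) (i : ℤ) : td d 0 i = d i := by
  simp [td]

lemma td_one (d : ℤ → L) (i : ℤ) : td d 1 i = d (i+1) - d i := by
  have := td_succ d 0 i
  rw [this, td_zero, td_zero]

lemma tx_zero (x : S → ℤ → L) (s : S) (j : ℤ) : tx x 0 s j = x s j := by
  simp [tx]

lemma br_td1_td (d : ℤ → L) (hd : ∀ m n : ℤ, ⁅d m, d n⁆ = ((n:ℂ) - (m:ℂ)) • d (m+n)) :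
    ∀ (b : ℕ) (i j : ℤ), ⁅td d 1 i, td d b j⁆
      = ((b:ℂ) - 1) • td d b (i+j+1) + ((j:ℂ) - (i:ℂ)) • td d (b+1) (i+j) := by
  intro b
  induction b with
  | zero =>
    intro i j
    rw [td_one, td_zero, sub_lie, hd, hd]
    simp only [td_succ, td_zero]
    have h1 : i+1+j = i+j+1 := by ring
    rw [h1]
    push_cast
    module
  | succ b ih =>
    intro i j
    rw [td_succ d b j, lie_sub, ih, ih]
    simp only [td_succ]
    have h1 : i+(j+1) = i+j+1 := by ring
    rw [h1]
    push_cast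
    module

lemma br_td1_tx (d : ℤ → L) (x : S → ℤ → L) (β : S → ℂ)
    (hdx : ∀ (i : ℤ) (s : S) (k : ℤ), ⁅d i, x s k⁆ = ((k:ℂ) + (i:ℂ) * β s) • x s (i+k)) :
    ∀ (b : ℕ) (i : ℤ) (s : S) (j : ℤ), ⁅td d 1 i, tx x b s j⁆
      = ((b:ℂ) + β s) • tx x b s (i+j+1) + ((j:ℂ) + (i:ℂ) * β s) • tx x (b+1) s (i+j) := by
  intro b
  induction b with
  | zero =>
    intro i s j
    rw [td_one, tx_zero, sub_lie, hdx, hdx]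
    simp only [tx_succ, tx_zero]
    have h1 : i+1+j = i+j+1 := by ring
    rw [h1]
    push_cast
    module
  | succ b ih =>
    intro i s j
    rw [tx_succ x b s j, lie_sub, ih, ih]
    simp only [tx_succ]
    have h1 : i+(j+1) = i+j+1 := by ring
    rw [h1]
    push_cast
    module

lemma br_tdsucc_tx0 (d : ℤ → L) (x : S → ℤ → L) (β : S → ℂ)
    (hdx : ∀ (i : ℤ) (s : S) (k : ℤ), ⁅d i, x s k⁆ = ((k:ℂ) + (i:ℂ) * β s) • x s (i+k)) :
    ∀ (a : ℕ) (i : ℤ) (s : S) (j : ℤ), ⁅td d (a+1) i, tx x 0 s j⁆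
      = (((a:ℂ) + 1) * β s) • tx x a s (i+j+1) + ((j:ℂ) + (i:ℂ) * β s) • tx x (a+1) s (i+j) := by
  intro a
  induction a with
  | zero =>
    intro i s j
    rw [br_td1_tx d x β hdx 0 i s j]
    push_cast
    module
  | succ a ih =>
    intro i s j
    rw [td_succ d (a+1) i, sub_lie, ih, ih]
    simp only [tx_succ]
    have h1 : i+1+j = i+j+1 := by ring
    rw [h1]
    push_cast
    module

lemma br_tx0_tx (x : S → ℤ → L) (c : S → S → (S →₀ ℂ))
    (hxx : ∀ (s p : S) (j k : ℤ), ⁅x s j, x p k⁆ = (c s p).sum fun q a => a • x q (j+k)) :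
    ∀ (b : ℕ) (s p : S) (j m : ℤ), ⁅tx x 0 s j, tx x b p m⁆
      = (c s p).sum fun q a => a • tx x b q (j+m) := by
  intro b
  induction b with
  | zero =>
    intro s p j m
    rw [tx_zero, tx_zero, hxx]
    refine Finsupp.sum_congr fun q _ => ?_
    rw [tx_zero]
  | succ b ih =>
    intro s p j m
    rw [tx_succ x b p m, lie_sub, ih, ih]
    rw [← Finsupp.sum_sub]
    refine Finsupp.sum_congr fun q _ => ?_
    rw [tx_succ]
    have h1 : j+(m+1) = j+m+1 := by ring
    rw [h1, smul_sub]

lemma br_tx_tx (x : S → ℤ → L) (c : S → S → (S →₀ ℂ))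
    (hxx : ∀ (s p : S) (j k : ℤ), ⁅x s j, x p k⁆ = (c s p).sum fun q a => a • x q (j+k)) :
    ∀ (a b : ℕ) (s p : S) (j m : ℤ), ⁅tx x a s j, tx x b p m⁆
      = (c s p).sum fun q α => α • tx x (a+b) q (j+m) := by
  intro a
  induction a with
  | zero => intro b s p j m; simpa using br_tx0_tx x c hxx b s p j m
  | succ a ih =>
    intro b s p j m
    rw [tx_succ x a s j, sub_lie, ih, ih]
    rw [← Finsupp.sum_sub, show a+1+b = a+b+1 from by omega]
    refine Finsupp.sum_congr fun q _ => ?_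
    rw [tx_succ]
    have h1 : j+1+m = j+m+1 := by ring
    rw [h1, smul_sub]

lemma td_mem (d : ℤ → L) (x : S → ℤ → L) (k n : ℕ) (i : ℤ) :
    td d (k+1+n) i ∈ aSub d x k := by
  induction n generalizing i with
  | zero => exact Submodule.subset_span (Or.inl ⟨i, rfl⟩)
  | succ n ih =>
    rw [show k+1+(n+1) = (k+1+n)+1 from by omega, td_succ]
    exact sub_mem (ih (i+1)) (ih i)

lemma tx_mem (d : ℤ → L) (x : S → ℤ → L) (k n : ℕ) (s : S) (j : ℤ) :
    tx x (k+n) s j ∈ aSub d x k := by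
  induction n generalizing j with
  | zero => exact Submodule.subset_span (Or.inr ⟨(s, j), rfl⟩)
  | succ n ih =>
    rw [show k+(n+1) = (k+n)+1 from by omega, tx_succ]
    exact sub_mem (ih (j+1)) (ih j)

lemma ideal_key (d : ℤ → L) (x : S → ℤ → L) (β : S → ℂ) (c : S → S → (S →₀ ℂ))
    (hd : ∀ m n : ℤ, ⁅d m, d n⁆ = ((n : ℂ) - (m : ℂ)) • d (m + n))
    (hdx : ∀ (i : ℤ) (s : S) (k : ℤ),
      ⁅d i, x s k⁆ = ((k : ℂ) + (i : ℂ) * β s) • x s (i + k))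
    (hxx : ∀ (s p : S) (j k : ℤ),
      ⁅x s j, x p k⁆ = (c s p).sum fun q a => a • x q (j + k))
    (k : ℕ) :
    ∀ u ∈ aSub d x 0, ∀ v ∈ aSub d x k, ⁅u, v⁆ ∈ aSub d x k := by
  have gen : ∀ u ∈ ((Set.range fun i : ℤ => td d (0 + 1) i) ∪
      (Set.range fun p : S × ℤ => tx x 0 p.1 p.2)),
      ∀ v ∈ aSub d x k, ⁅u, v⁆ ∈ aSub d x k := by
    intro u hu v hv
    induction hv using Submodule.span_induction with
    | mem w hw =>
      have h01 : (0:ℕ) + 1 = 1 := rfl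
      rw [h01] at hu
      rcases hu with ⟨i, rfl⟩ | ⟨⟨s, j⟩, rfl⟩ <;>
        rcases hw with ⟨m, rfl⟩ | ⟨⟨p, n⟩, rfl⟩
      · -- [td 1 i, td (k+1) m]
        rw [br_td1_td d hd (k+1) i m]
        exact add_mem
          (Submodule.smul_mem _ _ (Submodule.subset_span (Or.inl ⟨i+m+1, rfl⟩)))
          (Submodule.smul_mem _ _ (td_mem d x k 1 (i+m)))
      · -- [td 1 i, tx k p n]
        rw [br_td1_tx d x β hdx k i p n]
        exact add_mem
          (Submodule.smul_mem _ _ (Submodule.subset_span (Or.inr ⟨(p, i+n+1), rfl⟩)))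
          (Submodule.smul_mem _ _ (tx_mem d x k 1 p (i+n)))
      · -- [tx 0 s j, td (k+1) m]
        rw [← lie_skew, br_tdsucc_tx0 d x β hdx k m s j]
        exact neg_mem (add_mem
          (Submodule.smul_mem _ _ (Submodule.subset_span (Or.inr ⟨(s, m+j+1), rfl⟩)))
          (Submodule.smul_mem _ _ (tx_mem d x k 1 s (m+j))))
      · -- [tx 0 s j, tx k p n]
        rw [br_tx_tx x c hxx 0 k s p j n]
        have hmem : ∀ q : S, tx x (0+k) q (j+n) ∈ aSub d x k := by
          intro q
          simp only [Nat.zero_add]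
          exact Submodule.subset_span (Or.inr ⟨(q, j+n), rfl⟩)
        exact Submodule.finsuppSum_mem ℂ _ (c s p) _ fun q _ => Submodule.smul_mem _ _ (hmem q)
    | zero => rw [lie_zero]; exact zero_mem _
    | add a b _ _ pa pb => rw [lie_add]; exact add_mem pa pb
    | smul t a _ pa => rw [lie_smul]; exact Submodule.smul_mem _ _ pa
  intro u hu
  induction hu using Submodule.span_induction with
  | mem u hu => exact gen u hu
  | zero => intro v hv; rw [zero_lie]; exact zero_mem _
  | add a b _ _ pa pb => intro v hv; rw [add_lie]; exact add_mem (pa v hv) (pb v hv)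
  | smul t a _ pa => intro v hv; rw [smul_lie]; exact Submodule.smul_mem _ _ (pa v hv)


theorem aSub_subalgebra_and_ideal (d : ℤ → L) (x : S → ℤ → L) (β : S → ℂ)
    (c : S → S → (S →₀ ℂ))
    (hd : ∀ m n : ℤ, ⁅d m, d n⁆ = ((n : ℂ) - (m : ℂ)) • d (m + n))
    (hdx : ∀ (i : ℤ) (s : S) (k : ℤ),
      ⁅d i, x s k⁆ = ((k : ℂ) + (i : ℂ) * β s) • x s (i + k))
    (hxx : ∀ (s p : S) (j k : ℤ),
      ⁅x s j, x p k⁆ = (c s p).sum fun q a => a • x q (j + k)) :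
    (∀ u ∈ aSub d x 0, ∀ v ∈ aSub d x 0, ⁅u, v⁆ ∈ aSub d x 0) ∧
      ∀ k : ℕ, aSub d x k ≤ aSub d x 0 ∧
        ∀ u ∈ aSub d x 0, ∀ v ∈ aSub d x k, ⁅u, v⁆ ∈ aSub d x k := by
  have key := ideal_key d x β c hd hdx hxx
  refine ⟨key 0, fun k => ⟨?_, key k⟩⟩
  refine Submodule.span_le.mpr ?_
  rintro u (⟨i, rfl⟩ | ⟨⟨s, j⟩, rfl⟩)
  · have h := td_mem d x 0 k i
    rwa [show 0+1+k = k+1 from by omega] at h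
  · have h := tx_mem d x 0 k s j
    rwa [show 0+k = k from by omega] at h
end

section
/- Every finite codimensional ideal of the Lie algebra (t-1)W (the Witt algebra elements vanishing at t = 1) contains (t-1)^k W for sufficiently large k. Equivalently, every finite dimensional module V over (t-1)W is annihilated by (t-1)^k W for k large enough. -/
/-!
STATEMENT 6: Every finite codimensional ideal of the Lie algebra `(t-1)W`
(the Witt algebra elements vanishing at `t = 1`) contains `(t-1)^k W` for
sufficiently large `k`.

Concrete model: `W = Der ℂ[t,t⁻¹]` sits inside `End_ℂ(ℂ[t,t⁻¹])` with the
commutator bracket; `wittD i = t^{i+1} d/dt` and `mulOp f` is multiplication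
by `f`.  `(t-1)W` is the span `tW` of the `(t-1)^{k+1} d_i`; an ideal of it
is a subspace `J ≤ tW` with `[tW, J] ⊆ J`; finite codimension in `tW` means
that `tW ≤ J + C` for some finite dimensional subspace `C`.
-/

/-- The derivation `d_n = t^{n+1} d/dt` of `ℂ[t,t⁻¹]`. -/
noncomputable def wittD (n : ℤ) : Module.End ℂ (LaurentPolynomial ℂ) :=
  (AddMonoidAlgebra.coeffLinearEquiv ℂ).symm.toLinearMap ∘ₗ
    (Finsupp.lsum ℂ fun a : ℤ => (a : ℂ) • Finsupp.lsingle (a + n) :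
      (ℤ →₀ ℂ) →ₗ[ℂ] (ℤ →₀ ℂ)) ∘ₗ
    (AddMonoidAlgebra.coeffLinearEquiv ℂ).toLinearMap

/-- Multiplication by the Laurent polynomial `f`. -/
noncomputable def mulOp (f : LaurentPolynomial ℂ) :
    Module.End ℂ (LaurentPolynomial ℂ) :=
  LinearMap.mulLeft ℂ f

open LaurentPolynomial in
/-- The Lie algebra `(t-1)W`, as a subspace of `End_ℂ(ℂ[t,t⁻¹])`:
the span of the operators `(t-1)^{k+1} d_i`, `k ∈ ℕ`, `i ∈ ℤ`. -/
noncomputable def tW : Submodule ℂ (Module.End ℂ (LaurentPolynomial ℂ)) :=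
  Submodule.span ℂ
    (Set.range fun p : ℕ × ℤ => mulOp ((T 1 - 1) ^ (p.1 + 1)) * wittD p.2)

open LaurentPolynomial

namespace CofinAux

@[simp] lemma mulOp_apply (f x : LaurentPolynomial ℂ) : mulOp f x = f * x := rfl

noncomputable def δop : Module.End ℂ (LaurentPolynomial ℂ) := wittD (-1)

lemma wittD_T (n a : ℤ) : wittD n (T a) = (a : ℂ) • T (a + n) := by
  rw [LaurentPolynomial.T, wittD, LinearMap.comp_apply, LinearMap.comp_apply]
  erw [Finsupp.lsum_single]
  rfl

lemma δop_T (a : ℤ) : δop (T a) = (a : ℂ) • T (a - 1) := by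
  rw [δop, wittD_T, sub_eq_add_neg]

lemma C_mul_T_eq_smul (a : ℂ) (n : ℤ) : (C a * T n : LaurentPolynomial ℂ) = a • T n := by
  rw [← single_eq_C_mul_T, LaurentPolynomial.T, AddMonoidAlgebra.smul_single, smul_eq_mul, mul_one]

lemma end_ext {φ ψ : Module.End ℂ (LaurentPolynomial ℂ)}
    (h : ∀ a : ℤ, φ (T a) = ψ (T a)) : φ = ψ := by
  refine LinearMap.ext fun x => ?_
  induction x using LaurentPolynomial.induction_on' with
  | add p q hp hq => simp [hp, hq]
  | C_mul_T n a => rw [C_mul_T_eq_smul, map_smul, map_smul, h]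

lemma δop_T_mul (n : ℤ) (y : LaurentPolynomial ℂ) :
    δop (T n * y) = δop (T n) * y + T n * δop y := by
  induction y using LaurentPolynomial.induction_on' with
  | add p q hp hq => simp only [mul_add, map_add, hp, hq]; ring
  | C_mul_T m a =>
      simp only [C_mul_T_eq_smul, mul_smul_comm, smul_mul_assoc, map_smul, ← T_add, δop_T]
      rw [show n - 1 + m = n + m - 1 by ring, show n + (m - 1) = n + m - 1 by ring]
      push_cast
      module

lemma δop_mul (x y : LaurentPolynomial ℂ) : δop (x * y) = δop x * y + x * δop y := by
  induction x using LaurentPolynomial.induction_on' with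
  | add p q hp hq => simp only [add_mul, map_add, hp, hq]; ring
  | C_mul_T n a =>
      rw [C_mul_T_eq_smul, smul_mul_assoc, map_smul, map_smul, δop_T_mul, smul_add,
        smul_mul_assoc, smul_mul_assoc]

lemma δop_one : δop (1 : LaurentPolynomial ℂ) = 0 := by
  have := δop_T 0
  simpa using this

lemma δop_T_one : δop (T 1 : LaurentPolynomial ℂ) = 1 := by
  rw [δop_T]
  norm_num

noncomputable def Dop : LaurentPolynomial ℂ →ₗ[ℂ] Module.End ℂ (LaurentPolynomial ℂ) where
  toFun f := mulOp f * δop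
  map_add' f g := by ext x; simp [add_mul]
  map_smul' c f := by ext x; simp [smul_mul_assoc]

lemma Dop_apply (f x : LaurentPolynomial ℂ) : Dop f x = f * δop x := rfl

lemma Dop_T_one (f : LaurentPolynomial ℂ) : Dop f (T 1) = f := by
  rw [Dop_apply, δop_T_one, mul_one]

lemma Dop_inj : Function.Injective Dop := by
  intro f g h
  have := congrArg (fun φ : Module.End ℂ (LaurentPolynomial ℂ) => φ (T 1)) h
  simpa [Dop_T_one] using this

lemma lie_Dop (f g : LaurentPolynomial ℂ) :
    ⁅Dop f, Dop g⁆ = Dop (f * δop g - g * δop f) := by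
  refine LinearMap.ext fun x => ?_
  simp only [Ring.lie_def, LinearMap.sub_apply, Module.End.mul_apply, Dop_apply, δop_mul]
  ring

lemma gen_eq (c : LaurentPolynomial ℂ) (i : ℤ) :
    mulOp c * wittD i = Dop (c * T (i + 1)) := by
  refine end_ext fun a => ?_
  rw [Module.End.mul_apply, wittD_T, Dop_apply, δop_T, map_smul, mulOp_apply, mul_smul_comm,
    mul_assoc, ← T_add, show i + 1 + (a - 1) = a + i by ring]

end CofinAux

namespace CofinAux

noncomputable def sE : LaurentPolynomial ℂ := T 1 - 1

noncomputable def gE (b : ℕ) (l : ℤ) : LaurentPolynomial ℂ := sE ^ (b + 1) * T l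

noncomputable def MM : Submodule ℂ (LaurentPolynomial ℂ) := LinearMap.range (mulOp sE)

lemma mem_MM {x : LaurentPolynomial ℂ} : x ∈ MM ↔ ∃ y, sE * y = x := Iff.rfl

lemma gE_mem_MM (b : ℕ) (l : ℤ) : gE b l ∈ MM :=
  ⟨sE ^ b * T l, by rw [mulOp_apply, gE, ← mul_assoc, ← pow_succ']⟩

lemma sE_mem_MM : sE ∈ MM := ⟨1, mul_one sE⟩

lemma δop_sE : δop sE = 1 := by
  rw [sE, map_sub, δop_T_one, show (1 : LaurentPolynomial ℂ) = T 0 from rfl, δop_T]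
  norm_num

lemma δop_sE_pow (b : ℕ) : δop (sE ^ (b + 1)) = ((b : ℂ) + 1) • sE ^ b := by
  induction b with
  | zero => simp [δop_sE]
  | succ b ih =>
      rw [pow_succ, δop_mul, ih, δop_sE, mul_one, smul_mul_assoc, ← pow_succ]
      push_cast
      module

lemma δop_gE (b : ℕ) (l : ℤ) :
    δop (gE b l) = ((b : ℂ) + 1) • (sE ^ b * T l) + (l : ℂ) • (sE ^ (b + 1) * T (l - 1)) := by
  rw [gE, δop_mul, δop_sE_pow, δop_T, smul_mul_assoc, mul_smul_comm]

lemma AgE (b : ℕ) (l : ℤ) :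
    sE * δop (gE b l) - gE b l = (b : ℂ) • gE b l + (l : ℂ) • gE (b + 1) (l - 1) := by
  rw [δop_gE, mul_add, mul_smul_comm, mul_smul_comm, ← mul_assoc, ← pow_succ', gE, gE,
    ← mul_assoc, ← pow_succ', add_smul, one_smul]
  module

lemma brE (b : ℕ) (l : ℤ) :
    gE 0 l * δop (gE b 0) - gE b 0 * δop (gE 0 l)
      = (b : ℂ) • gE b l - (l : ℂ) • gE (b + 1) (l - 1) := by
  have h0 : gE 0 l = sE * T l := by rw [gE, pow_one]
  have h1 : δop (gE b 0) = ((b : ℂ) + 1) • sE ^ b := by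
    rw [δop_gE]; simp [T_zero]
  have h2 : δop (gE 0 l) = T l + (l : ℂ) • (sE * T (l - 1)) := by
    rw [δop_gE]; norm_num [pow_one]
  have h3 : gE b 0 = sE ^ (b + 1) := by rw [gE, T_zero, mul_one]
  rw [h1, h2, h0, h3, mul_smul_comm, mul_add, mul_smul_comm]
  have e1 : sE * T l * sE ^ b = gE b l := by rw [gE]; ring
  have e2 : sE ^ (b + 1) * (sE * T (l - 1)) = gE (b + 1) (l - 1) := by rw [gE]; ring
  have e3 : sE ^ (b + 1) * T l = gE b l := rfl
  rw [e1, e2, e3, add_smul, one_smul]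
  module

end CofinAux

namespace CofinAux

lemma sE_def : sE = T 1 - 1 := rfl

lemma gen_eq' (k : ℕ) (i : ℤ) :
    mulOp (sE ^ (k + 1)) * wittD i = Dop (gE k (i + 1)) :=
  gen_eq _ i

lemma tW_eq : tW = Submodule.map Dop MM := by
  apply le_antisymm
  · rw [tW, Submodule.span_le]
    rintro _ ⟨⟨k, i⟩, rfl⟩
    exact ⟨gE k (i + 1), gE_mem_MM k (i + 1), (gen_eq' k i).symm⟩
  · rintro _ ⟨x, ⟨y, rfl⟩, rfl⟩
    rw [mulOp_apply]
    induction y using LaurentPolynomial.induction_on' with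
    | add p q hp hq => rw [mul_add, map_add]; exact add_mem hp hq
    | C_mul_T n a =>
        rw [C_mul_T_eq_smul, mul_smul_comm, map_smul]
        refine Submodule.smul_mem _ _ ?_
        have hgen : (fun p : ℕ × ℤ => mulOp ((T 1 - 1) ^ (p.1 + 1)) * wittD p.2) (0, n - 1)
            = Dop (sE * T n) := by
          show mulOp ((T 1 - 1) ^ (0 + 1)) * wittD (n - 1) = Dop (sE * T n)
          rw [← sE_def, gen_eq, zero_add, pow_one, show n - 1 + 1 = n from by ring]
        rw [tW]
        exact Submodule.subset_span ⟨(0, n - 1), hgen⟩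

theorem main_aux (P : Submodule ℂ (LaurentPolynomial ℂ)) (hPM : P ≤ MM)
    (hid : ∀ f ∈ MM, ∀ p ∈ P, f * δop p - p * δop f ∈ P)
    (C' : Submodule ℂ (LaurentPolynomial ℂ)) (hC' : FiniteDimensional ℂ C')
    (hC'M : C' ≤ MM) (hsup : MM ≤ P ⊔ C') :
    ∃ N : ℕ, ∀ b : ℕ, N ≤ b → ∀ l : ℤ, gE b l ∈ P := by
  classical
  set P' : Submodule ℂ MM := P.comap MM.subtype with hP'
  haveI : FiniteDimensional ℂ (MM ⧸ P') := by
    refine Module.Finite.of_surjective (P'.mkQ ∘ₗ Submodule.inclusion hC'M) ?_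
    intro q
    obtain ⟨x, rfl⟩ := P'.mkQ_surjective q
    obtain ⟨p, hp, c, hc, hpc⟩ := Submodule.mem_sup.1 (hsup x.2)
    refine ⟨⟨c, hc⟩, ?_⟩
    rw [LinearMap.comp_apply, Submodule.mkQ_apply, Submodule.mkQ_apply, Submodule.Quotient.eq]
    show (↑(Submodule.inclusion hC'M ⟨c, hc⟩ - x) : LaurentPolynomial ℂ) ∈ P
    have hval : (↑(Submodule.inclusion hC'M ⟨c, hc⟩ - x) : LaurentPolynomial ℂ) = c - ↑x := by
      push_cast
      rfl
    rw [hval, ← hpc]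
    simpa using neg_mem hp
  set Aop : Module.End ℂ (LaurentPolynomial ℂ) := mulOp sE * δop - 1 with hAopdef
  have hAop : ∀ x, Aop x = sE * δop x - x := fun x => rfl
  have hAM : ∀ x ∈ MM, Aop x ∈ MM := by
    rintro _ ⟨y, rfl⟩
    rw [hAop, mulOp_apply]
    exact ⟨δop (sE * y) - y, by rw [mulOp_apply, mul_sub]⟩
  have hAP : ∀ x ∈ P, Aop x ∈ P := by
    intro p hp
    have := hid sE sE_mem_MM p hp
    rwa [δop_sE, mul_one, ← hAop] at this
  set Ares : MM →ₗ[ℂ] MM := Aop.restrict hAM with hAres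
  have hAresP' : ∀ x ∈ P', Ares x ∈ P' := by
    intro x hx
    show (↑(Ares x) : LaurentPolynomial ℂ) ∈ P
    show Aop ↑x ∈ P
    exact hAP _ hx
  set Abar : (MM ⧸ P') →ₗ[ℂ] (MM ⧸ P') :=
    Submodule.mapQ P' P' Ares (fun x hx => Submodule.mem_comap.2 (hAresP' x hx)) with hAbar
  obtain ⟨N, hN⟩ : ∃ N : ℕ, ∀ n : ℕ, N ≤ n → ¬ Module.End.HasEigenvalue Abar (n : ℂ) := by
    have hfin : ((Nat.cast : ℕ → ℂ) ⁻¹' {μ : ℂ | Module.End.HasEigenvalue Abar μ}).Finite :=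
      Set.Finite.preimage (fun a _ b _ h => Nat.cast_injective h) (Module.End.finite_hasEigenvalue Abar)
    obtain ⟨M, hM⟩ := hfin.bddAbove
    exact ⟨M + 1, fun n hn hev => by have := hM hev; omega⟩
  have hinj : ∀ n : ℕ, N ≤ n → ∀ q : MM ⧸ P', Abar q = (n : ℂ) • q → q = 0 := by
    intro n hn q hq
    by_contra h0
    exact hN n hn (Module.End.hasEigenvalue_of_hasEigenvector
      ⟨Module.End.mem_eigenspace_iff.2 hq, h0⟩)
  set v : ℕ → ℤ → MM ⧸ P' := fun b l => P'.mkQ ⟨gE b l, gE_mem_MM b l⟩ with hv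
  have hAbar_v : ∀ (b : ℕ) (l : ℤ),
      Abar (v b l) = (b : ℂ) • v b l + (l : ℂ) • v (b + 1) (l - 1) := by
    intro b l
    have h1 : Abar (v b l) = P'.mkQ (Ares ⟨gE b l, gE_mem_MM b l⟩) := by
      simp only [hv, hAbar]
      rw [Submodule.mkQ_apply, Submodule.mkQ_apply, Submodule.mapQ_apply]
    have h2 : Ares ⟨gE b l, gE_mem_MM b l⟩
        = (b : ℂ) • (⟨gE b l, gE_mem_MM b l⟩ : MM)
          + (l : ℂ) • (⟨gE (b + 1) (l - 1), gE_mem_MM (b + 1) (l - 1)⟩ : MM) := by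
      apply Subtype.ext
      show Aop (gE b l) = (b : ℂ) • gE b l + (l : ℂ) • gE (b + 1) (l - 1)
      rw [hAop, AgE]
    rw [h1, h2, map_add, map_smul, map_smul]
  have hmk0 : ∀ (b : ℕ) (l : ℤ), v b l = 0 ↔ gE b l ∈ P := by
    intro b l
    simp only [hv]
    rw [Submodule.mkQ_apply, Submodule.Quotient.mk_eq_zero]
    exact Iff.rfl
  have hv0 : ∀ b : ℕ, N ≤ b → v b 0 = 0 := by
    intro b hb
    refine hinj b hb _ ?_
    rw [hAbar_v]
    norm_num
  refine ⟨N, fun b hb l => ?_⟩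
  have hb0 : gE b 0 ∈ P := (hmk0 b 0).1 (hv0 b hb)
  have hbr := hid (gE 0 l) (gE_mem_MM 0 l) (gE b 0) hb0
  rw [brE] at hbr
  have hx : ((b : ℂ) • (⟨gE b l, gE_mem_MM b l⟩ : MM)
      - (l : ℂ) • (⟨gE (b + 1) (l - 1), gE_mem_MM (b + 1) (l - 1)⟩ : MM)) ∈ P' := by
    show ((b : ℂ) • (⟨gE b l, gE_mem_MM b l⟩ : MM)
      - (l : ℂ) • (⟨gE (b + 1) (l - 1), gE_mem_MM (b + 1) (l - 1)⟩ : MM) : MM).1 ∈ P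
    exact hbr
  have hrel : (b : ℂ) • v b l = (l : ℂ) • v (b + 1) (l - 1) := by
    have h0 := (Submodule.Quotient.mk_eq_zero P').2 hx
    rw [← Submodule.mkQ_apply, map_sub, map_smul, map_smul, sub_eq_zero] at h0
    exact h0
  have h2b : Abar (v b l) = ((2 * b : ℕ) : ℂ) • v b l := by
    rw [hAbar_v, ← hrel]
    push_cast
    rw [two_mul, add_smul]
  exact (hmk0 b l).1 (hinj (2 * b) (by omega) _ h2b)

end CofinAux

open CofinAux in
open LaurentPolynomial in
theorem cofinite_ideal_of_tW
    (J : Submodule ℂ (Module.End ℂ (LaurentPolynomial ℂ)))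
    (hJle : J ≤ tW)
    (hideal : ∀ u ∈ tW, ∀ v ∈ J, ⁅u, v⁆ ∈ J)
    (hcofin : ∃ C : Submodule ℂ (Module.End ℂ (LaurentPolynomial ℂ)),
      FiniteDimensional ℂ ↥C ∧ tW ≤ J ⊔ C) :
    ∃ N : ℕ, ∀ (k : ℕ) (i : ℤ),
      mulOp ((T 1 - 1) ^ (N + k + 1)) * wittD i ∈ J := by
  classical
  obtain ⟨C, hCfd, hle⟩ := hcofin
  haveI : FiniteDimensional ℂ C := hCfd
  set P : Submodule ℂ (LaurentPolynomial ℂ) := Submodule.comap Dop J ⊓ MM with hPdef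
  have hPM : P ≤ MM := inf_le_right
  have hDP : ∀ f ∈ P, Dop f ∈ J := fun f hf =>
    Submodule.mem_comap.1 (Submodule.mem_inf.1 hf).1
  have hDmem : ∀ f ∈ MM, Dop f ∈ tW := fun f hf => tW_eq ▸ Submodule.mem_map_of_mem hf
  have hid : ∀ f ∈ MM, ∀ p ∈ P, f * δop p - p * δop f ∈ P := by
    intro f hf p hp
    refine Submodule.mem_inf.2 ⟨Submodule.mem_comap.2 ?_, ?_⟩
    · rw [← lie_Dop]
      exact hideal _ (hDmem f hf) _ (hDP p hp)
    · obtain ⟨a, ha⟩ := hf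
      obtain ⟨c, hc⟩ := (Submodule.mem_inf.1 hp).2
      rw [mulOp_apply] at ha hc
      exact ⟨a * δop p - c * δop f, by rw [mulOp_apply, ← ha, ← hc]; ring⟩
  set C' : Submodule ℂ (LaurentPolynomial ℂ) := Submodule.comap Dop C ⊓ MM with hC'def
  have hmap : Submodule.map Dop C' ≤ C := by
    rintro _ ⟨y, hy, rfl⟩
    exact Submodule.mem_comap.1 (Submodule.mem_inf.1 hy).1
  haveI : FiniteDimensional ℂ (Submodule.map Dop C') :=
    Submodule.finiteDimensional_of_le hmap
  haveI hC'fd : FiniteDimensional ℂ C' :=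
    Module.Finite.equiv (Submodule.equivMapOfInjective Dop Dop_inj C').symm
  have hsup : MM ≤ P ⊔ C' := by
    intro f hf
    obtain ⟨u, hu, c, hc, huc⟩ := Submodule.mem_sup.1 (hle (hDmem f hf))
    have hu' := hJle hu
    rw [tW_eq] at hu'
    obtain ⟨h, hhM, hDh⟩ := hu'
    refine Submodule.mem_sup.2
      ⟨h, Submodule.mem_inf.2 ⟨Submodule.mem_comap.2 (by rw [hDh]; exact hu), hhM⟩,
        f - h, Submodule.mem_inf.2 ⟨Submodule.mem_comap.2 ?_, sub_mem hf hhM⟩, by ring⟩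
    have : Dop (f - h) = c := by rw [map_sub, hDh, ← huc, add_sub_cancel_left]
    rw [this]
    exact hc
  obtain ⟨N, hN⟩ := main_aux P hPM hid C' hC'fd inf_le_right hsup
  refine ⟨N, fun k i => ?_⟩
  have hg : gE (N + k) (i + 1) ∈ P := hN (N + k) (Nat.le_add_right N k) (i + 1)
  have heq : mulOp ((T 1 - 1) ^ (N + k + 1)) * wittD i = Dop (gE (N + k) (i + 1)) := by
    rw [← sE_def]
    exact gen_eq' (N + k) i
  rw [heq]
  exact hDP _ hg
end

section
/- Let L be a Lie superalgebra containing the Witt algebra W, and let M be a weight L-module (d_0 acts diagonalizably) with finite dimensional weight spaces and supp(M) ⊆ λ + ℤ. If for every v ∈ M there exists N(v) ∈ ℕ with d_i v = 0 for all i ≥ N(v), then supp(M) is bounded above, i.e., there is μ ∈ λ + ℤ such that M_ν = 0 whenever ν - μ ∈ ℕ. -/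
/-!
STATEMENT 7: Let `L` be a Lie algebra containing the Witt algebra `W`
(elements `d i` with `[d_m, d_n] = (n-m) d_{m+n}`), and `M` a weight
`L`-module (i.e. `d_0` acts diagonalizably) with finite dimensional weight
spaces and `supp M ⊆ λ + ℤ`.  If for every `v ∈ M` there is `N(v)` with
`d_i v = 0` for all `i ≥ N(v)`, then `supp M` is bounded above: there is
`μ ∈ λ + ℤ` with `M_ν = 0` whenever `ν - μ ∈ ℕ = {1, 2, …}`.

Weight spaces are the eigenspaces of the action of `d 0`.
-/

section WittAux

variable {L : Type*} [LieRing L] [LieAlgebra ℂ L]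
    {M : Type*} [AddCommGroup M] [Module ℂ M]
    [LieRingModule L M] [LieModule ℂ L M]
    (d : ℤ → L)
    (hd : ∀ m n : ℤ, ⁅d m, d n⁆ = ((n : ℂ) - (m : ℂ)) • d (m + n))

theorem witt_d0_lie {μ : ℂ} {v : M}
    (hv : v ∈ Module.End.eigenspace (LieModule.toEnd ℂ L M (d 0)) μ) :
    ⁅d 0, v⁆ = μ • v := by
  rw [Module.End.mem_eigenspace_iff] at hv
  rw [← LieModule.toEnd_apply_apply ℂ L M (d 0) v, hv]

include hd in
theorem witt_double_lie (a b : ℤ) (v : M) :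
    ⁅d a, ⁅d b, v⁆⁆ = ((b : ℂ) - (a : ℂ)) • ⁅d (a + b), v⁆ + ⁅d b, ⁅d a, v⁆⁆ := by
  rw [leibniz_lie, hd a b, smul_lie]

include hd in
theorem witt_raise {μ : ℂ} {v : M}
    (hv : v ∈ Module.End.eigenspace (LieModule.toEnd ℂ L M (d 0)) μ) (i : ℤ) :
    ⁅d i, v⁆ ∈ Module.End.eigenspace (LieModule.toEnd ℂ L M (d 0)) (μ + (i : ℂ)) := by
  rw [Module.End.mem_eigenspace_iff, LieModule.toEnd_apply_apply]
  rw [witt_double_lie d hd 0 i v, witt_d0_lie d hv, zero_add, lie_smul]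
  push_cast
  module

include hd in
theorem witt_tail_invariant {N : ℤ} {v : M} (hv : ∀ i : ℤ, N ≤ i → ⁅d i, v⁆ = 0)
    (j : ℤ) (hj : 1 ≤ j) : ∀ i : ℤ, N ≤ i → ⁅d i, ⁅d j, v⁆⁆ = 0 := by
  intro i hi
  rw [witt_double_lie d hd i j v, hv i hi, hv (i + j) (by omega), lie_zero, smul_zero, add_zero]

include hd in
theorem witt_boundedA (lam : ℂ)
    (hfd : ∀ μ : ℂ,
      FiniteDimensional ℂ (Module.End.eigenspace (LieModule.toEnd ℂ L M (d 0)) μ))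
    (N : ℤ) (hN : 1 ≤ N) :
    ∃ T : ℤ, ∀ t : ℤ, T < t →
      ∀ v ∈ Module.End.eigenspace (LieModule.toEnd ℂ L M (d 0)) (lam + (t : ℂ)),
        (∀ i : ℤ, N ≤ i → ⁅d i, v⁆ = 0) → v = 0 := by
  set E : ℂ → Submodule ℂ M :=
    fun μ => Module.End.eigenspace (LieModule.toEnd ℂ L M (d 0)) μ with hE
  by_contra hc
  push_neg at hc
  -- hc : ∀ T, ∃ t, T < t ∧ ∃ v ∈ E (lam+t), (∀ i...) ∧ v ≠ 0
  have H' : ∀ T : ℤ, ∃ t : ℤ, T < t ∧ (lam + (t : ℂ) ≠ 0) ∧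
      ∃ v, v ∈ E (lam + (t : ℂ)) ∧ (∀ i : ℤ, N ≤ i → ⁅d i, v⁆ = 0) ∧ v ≠ 0 := by
    intro T
    obtain ⟨t1, ht1, v1, hv1, hp1, hn1⟩ := hc T
    by_cases h0 : lam + (t1 : ℂ) = 0
    · obtain ⟨t2, ht2, v2, hv2, hp2, hn2⟩ := hc t1
      refine ⟨t2, ht1.trans ht2, ?_, v2, hv2, hp2, hn2⟩
      intro h0'
      have : (t1 : ℂ) = (t2 : ℂ) := by linear_combination h0 - h0'
      have : t1 = t2 := by exact_mod_cast this
      omega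
    · exact ⟨t1, ht1, h0, v1, hv1, hp1, hn1⟩
  choose t ht hlam v hvE hvP hvne using H'
  -- the sequence of arguments
  set a : ℕ → ℤ := fun j => Nat.rec (N - 1) (fun _ p => t p + (N - 1)) j with ha
  set m : ℕ → ℤ := fun j => t (a j) with hm
  have hstep : ∀ j : ℕ, m j + (N - 1) < m (j + 1) := by
    intro j
    exact ht (m j + (N - 1))
  have hm0 : N ≤ m 0 := by
    have h1 : N - 1 < m 0 := ht (N - 1)
    omega
  have hmge : ∀ j : ℕ, N ≤ m j := by
    intro j
    induction j with
    | zero => exact hm0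
    | succ j ih => have := hstep j; omega
  have hgap : ∀ k j : ℕ, k < j → m k + N ≤ m j := by
    intro k j hkj
    induction j with
    | zero => omega
    | succ j ih =>
      have h1 := hstep j
      rcases Nat.lt_succ_iff_lt_or_eq.mp hkj with h | h
      · have := ih h
        have := hmge j
        omega
      · subst h; omega
  -- the independent family in E lam
  set X : ℕ → M := fun j => ⁅d (-(m j)), v (a j)⁆ with hX
  have hXmem : ∀ j : ℕ, X j ∈ E lam := by
    intro j
    have := witt_raise d hd (hvE (a j)) (-(m j))
    have harg : lam + ((m j : ℂ)) + ((-(m j) : ℤ) : ℂ) = lam := by push_cast; ring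
    rw [← harg]
    exact this
  have hdiag : ∀ j : ℕ,
      ⁅d (m j), X j⁆ = ((-(2 * (m j : ℂ))) * (lam + (m j : ℂ))) • v (a j) := by
    intro j
    rw [hX]
    rw [witt_double_lie d hd (m j) (-(m j)) (v (a j))]
    rw [hvP (a j) (m j) (hmge j), lie_zero, add_zero, add_neg_cancel]
    rw [witt_d0_lie d (hvE (a j)), smul_smul]
    have hmj : ((t (a j) : ℤ) : ℂ) = (m j : ℂ) := rfl
    rw [hmj]
    push_cast
    ring_nf
  have hoff : ∀ k j : ℕ, k < j → ⁅d (m j), X k⁆ = 0 := by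
    intro k j hkj
    rw [hX]
    rw [witt_double_lie d hd (m j) (-(m k)) (v (a k))]
    rw [hvP (a k) (m j) (hmge j), lie_zero, add_zero]
    rw [hvP (a k) (m j + -(m k)) (by have := hgap k j hkj; omega), smul_zero]
  have hind : LinearIndependent ℂ X := by
    rw [linearIndependent_iff]
    intro l hl
    by_contra hl0
    have hsupp : l.support.Nonempty := Finsupp.support_nonempty_iff.2 hl0
    set j := l.support.max' hsupp with hj
    have hjmem : j ∈ l.support := l.support.max'_mem hsupp
    have happ := congrArg (LieModule.toEnd ℂ L M (d (m j))) hl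
    rw [map_zero, Finsupp.linearCombination_apply, map_finsuppSum] at happ
    rw [Finsupp.sum] at happ
    rw [Finset.sum_eq_single_of_mem j hjmem (fun k hk hne => by
      rw [map_smul, LieModule.toEnd_apply_apply,
        hoff k j (lt_of_le_of_ne (Finset.le_max' _ k hk) hne), smul_zero])] at happ
    rw [map_smul, LieModule.toEnd_apply_apply, hdiag j, smul_smul] at happ
    have hvz := hvne (a j)
    rw [smul_eq_zero] at happ
    have hmj0 : (m j : ℂ) ≠ 0 := Int.cast_ne_zero.mpr (by have := hmge j; omega)
    have hcoef : (-(2 * (m j : ℂ))) * (lam + (m j : ℂ)) ≠ 0 := by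
      apply mul_ne_zero
      · simpa using hmj0
      · exact hlam (a j)
    rcases happ with h | h
    · rcases mul_eq_zero.mp h with h | h
      · exact (Finsupp.mem_support_iff.mp hjmem) h
      · exact hcoef h
    · exact hvz h
  -- contradiction with finite dimensionality
  haveI := hfd lam
  have hY : LinearIndependent ℂ (fun j : ℕ => (⟨X j, hXmem j⟩ : E lam)) := by
    apply LinearIndependent.of_comp (E lam).subtype
    convert hind
    rfl
  exact Module.Finite.not_linearIndependent_of_infinite _ hY

end WittAux

theorem supp_upper_bounded
    {L : Type*} [LieRing L] [LieAlgebra ℂ L]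
    {M : Type*} [AddCommGroup M] [Module ℂ M]
    [LieRingModule L M] [LieModule ℂ L M]
    (d : ℤ → L)
    (hd : ∀ m n : ℤ, ⁅d m, d n⁆ = ((n : ℂ) - (m : ℂ)) • d (m + n))
    (lam : ℂ)
    -- M is a weight module: sum of the eigenspaces of the action of d 0
    (hwt : ⨆ μ : ℂ, Module.End.eigenspace (LieModule.toEnd ℂ L M (d 0)) μ = ⊤)
    -- finite dimensional weight spaces
    (hfd : ∀ μ : ℂ,
      FiniteDimensional ℂ (Module.End.eigenspace (LieModule.toEnd ℂ L M (d 0)) μ))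
    -- supp(M) ⊆ λ + ℤ
    (hsupp : ∀ μ : ℂ,
      Module.End.eigenspace (LieModule.toEnd ℂ L M (d 0)) μ ≠ ⊥ → ∃ n : ℤ, μ = lam + n)
    -- local nilpotency of the positive part
    (hvan : ∀ v : M, ∃ N : ℤ, ∀ i : ℤ, N ≤ i → ⁅d i, v⁆ = 0) :
    ∃ μ : ℂ, (∃ n : ℤ, μ = lam + n) ∧
      ∀ n : ℕ, Module.End.eigenspace (LieModule.toEnd ℂ L M (d 0)) (μ + (n + 1)) = ⊥ := by
  set E : ℂ → Submodule ℂ M :=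
    fun μ => Module.End.eigenspace (LieModule.toEnd ℂ L M (d 0)) μ with hE
  by_cases Hb : ∃ T : ℤ, ∀ t : ℤ, T < t → E (lam + (t : ℂ)) = ⊥
  · obtain ⟨T, hT⟩ := Hb
    refine ⟨lam + T, ⟨T, rfl⟩, fun n => ?_⟩
    have := hT (T + (n + 1)) (by omega)
    have harg : lam + ((T + ((n : ℤ) + 1) : ℤ) : ℂ) = lam + (T : ℂ) + ((n : ℂ) + 1) := by
      push_cast; ring
    rw [harg] at this
    exact this
  · exfalso
    push_neg at Hb
    -- Hb : ∀ T, ∃ t, T < t ∧ E (lam + t) ≠ ⊥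
    obtain ⟨T1, hT1⟩ := witt_boundedA d hd lam hfd 1 le_rfl
    obtain ⟨n, hn, hne⟩ := Hb T1
    obtain ⟨v, hv, hv0⟩ := (Submodule.ne_bot_iff _).1 hne
    obtain ⟨N0, hN0⟩ := hvan v
    set N : ℤ := max N0 1 with hNdef
    have hN1 : 1 ≤ N := le_max_right _ _
    have hvP : ∀ i : ℤ, N ≤ i → ⁅d i, v⁆ = 0 := fun i hi =>
      hN0 i (le_trans (le_max_left _ _) hi)
    obtain ⟨T2, hT2⟩ := witt_boundedA d hd lam hfd N hN1
    -- the set of levels ≥ n supporting a nonzero tail-killed vector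
    set P : ℤ → Prop := fun s => n ≤ s ∧
      ∃ w, w ∈ E (lam + (s : ℂ)) ∧ (∀ i : ℤ, N ≤ i → ⁅d i, w⁆ = 0) ∧ w ≠ 0 with hP
    have hPn : P n := ⟨le_refl n, v, hv, hvP, hv0⟩
    have hPbdd : ∀ s : ℤ, P s → s ≤ max T2 n := by
      intro s hs
      by_contra hlt
      obtain ⟨hns, w, hwE, hwP, hw0⟩ := hs
      exact hw0 (hT2 s (by omega) w hwE hwP)
    obtain ⟨ts, hts, htsmax⟩ := Int.exists_greatest_of_bdd ⟨max T2 n, hPbdd⟩ ⟨n, hPn⟩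
    obtain ⟨hnts, y, hyE, hyP, hy0⟩ := hts
    -- y is a highest weight vector
    have hy1 : ∀ i : ℤ, 1 ≤ i → ⁅d i, y⁆ = 0 := by
      intro i hi
      by_contra hz
      have hmem : ⁅d i, y⁆ ∈ E (lam + ((ts + i : ℤ) : ℂ)) := by
        have := witt_raise d hd hyE i
        have harg : lam + (ts : ℂ) + (i : ℂ) = lam + ((ts + i : ℤ) : ℂ) := by
          push_cast; ring
        rw [harg] at this
        exact this
      have hPt : P (ts + i) :=
        ⟨by omega, ⁅d i, y⁆, hmem, witt_tail_invariant d hd hyP i hi, hz⟩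
      have := htsmax _ hPt
      omega
    exact hy0 (hT1 ts (by omega) y hyE hy1)
end

section
/- Let 𝒰̄ be the quotient of U(W̃𝔏) (for 𝔏̃ = W ⋉ (I ⊕ A), A = ℂ[t,t⁻¹], I = 𝔤 ⊗ A) by the ideal generated by t^i · t^j − t^{i+j} and t^0 − 1. Then the subspace 𝒯 of 𝒰̄ spanned by {t^{-i}·d_i − d_0, t^{-i}·x_s(i) : i ∈ ℤ, s ∈ S} satisfies [𝒯, d_0] = 0 and [𝒯, t^k] = 0 for all k ∈ ℤ. -/
/-!
STATEMENT 8: In `𝒰̄ = U(𝔏̃)/⟨t^i·t^j − t^{i+j}, t^0 − 1⟩`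
(`𝔏̃ = W ⋉ (𝔤⊗A ⊕ A)`, `A = ℂ[t,t⁻¹]`), the subspace `𝒯` spanned by
`t^{-i}·d_i − d_0` and `t^{-i}·x_s(i)` satisfies `[𝒯, d_0] = 0` and
`[𝒯, t^k] = 0` for all `k`.

Faithful model: `U` is any unital associative ℂ-algebra containing elements
`d i`, `x s i`, `t i` satisfying the defining (commutator) relations of `𝔏̃`
together with `t^i·t^j = t^{i+j}` and `t^0 = 1`; the claimed identities hold
in any such algebra, in particular in `𝒰̄` itself.  `⁅·,·⁆` is the ring
commutator.
-/

theorem T_commutes_with_d0_and_A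
    {U : Type*} [Ring U] [Algebra ℂ U] {S : Type*}
    (d : ℤ → U) (x : S → ℤ → U) (t : ℤ → U) (β : S → ℂ)
    (c : S → S → (S →₀ ℂ))
    (hdd : ∀ m n : ℤ, ⁅d m, d n⁆ = ((n : ℂ) - (m : ℂ)) • d (m + n))
    (hdx : ∀ (i : ℤ) (s : S) (k : ℤ),
      ⁅d i, x s k⁆ = ((k : ℂ) + (i : ℂ) * β s) • x s (i + k))
    (hxx : ∀ (s p : S) (j k : ℤ),
      ⁅x s j, x p k⁆ = (c s p).sum fun q a => a • x q (j + k))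
    (hdt : ∀ i k : ℤ, ⁅d i, t k⁆ = (k : ℂ) • t (i + k))
    (hxt : ∀ (s : S) (j k : ℤ), ⁅x s j, t k⁆ = 0)
    (htt : ∀ i j : ℤ, t i * t j = t (i + j))
    (ht0 : t 0 = 1) :
    ∀ u ∈ Submodule.span ℂ
        ((Set.range fun i : ℤ => t (-i) * d i - d 0) ∪
          (Set.range fun p : S × ℤ => t (-p.2) * x p.1 p.2)),
      ⁅u, d 0⁆ = 0 ∧ ∀ k : ℤ, ⁅u, t k⁆ = 0 := by
  letI : LieRing U := LieRing.ofAssociativeRing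
  have key : ∀ a b e : U, ⁅a * b, e⁆ = a * ⁅b, e⁆ + ⁅a, e⁆ * b := by
    intro a b e; simp only [Ring.lie_def]; noncomm_ring
  have hs : ∀ a b : U, ⁅a, b⁆ = -⁅b, a⁆ := fun a b => (lie_skew a b).symm
  have htc : ∀ i k : ℤ, ⁅t i, t k⁆ = 0 := by
    intro i k; rw [Ring.lie_def, htt, htt, add_comm]; simp
  have h1 : ∀ i : ℤ, ⁅t (-i) * d i - d 0, d 0⁆ = 0 ∧
      ∀ k : ℤ, ⁅t (-i) * d i - d 0, t k⁆ = 0 := by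
    intro i
    constructor
    · rw [sub_lie, key, hs (t (-i)) (d 0), hdd, hdt, lie_self]
      simp only [add_zero, zero_add, zero_sub, sub_zero, Int.cast_neg,
        Int.cast_zero, neg_smul, neg_neg, mul_neg, neg_mul, mul_smul_comm,
        smul_mul_assoc]
      module
    · intro k
      rw [sub_lie, key, hdt, hdt, htc]
      simp only [mul_smul_comm, htt, zero_mul, add_zero, zero_add]
      rw [show -i + (i + k) = k by ring]
      abel
  have h2 : ∀ (s : S) (i : ℤ), ⁅t (-i) * x s i, d 0⁆ = 0 ∧
      ∀ k : ℤ, ⁅t (-i) * x s i, t k⁆ = 0 := by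
    intro s i
    constructor
    · rw [key, hs (x s i) (d 0), hs (t (-i)) (d 0), hdx, hdt]
      simp only [zero_add, zero_mul, add_zero, Int.cast_neg, Int.cast_zero,
        neg_smul, neg_neg, mul_neg, neg_mul, mul_smul_comm, smul_mul_assoc]
      module
    · intro k
      rw [key, hxt, htc, mul_zero, zero_mul, add_zero]
  intro u hu
  refine Submodule.span_induction ?_ ?_ ?_ ?_ hu
  · rintro v (⟨i, rfl⟩ | ⟨⟨s, i⟩, rfl⟩)
    · exact h1 i
    · exact h2 s i
  · simp
  · rintro a b _ _ ⟨ha1, ha2⟩ ⟨hb1, hb2⟩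
    exact ⟨by rw [add_lie, ha1, hb1, add_zero],
      fun k => by rw [add_lie, ha2 k, hb2 k, add_zero]⟩
  · rintro r a _ ⟨ha1, ha2⟩
    exact ⟨by rw [smul_lie, ha1, smul_zero],
      fun k => by rw [smul_lie, ha2 k, smul_zero]⟩
end

section
/- In 𝒰̄, the subspace 𝒯 spanned by {T_i := t^{-i}·d_i − d_0, X_{s,i} := t^{-i}·x_s(i)} is closed under the commutator; in particular [T_i, T_j] = −j T_j + (j−i) T_{i+j} + i T_i, [T_i, X_{s,k}] = −k X_{s,k} + (k + iβ_s) X_{s,k+i}, and [X_{s,i}, X_{p,k}] = t^{-(i+k)}·[x_s, x_p](i+k). -/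
private lemma myLieMul {U : Type*} [Ring U] (a b c : U) :
    ⁅a, b * c⁆ = ⁅a, b⁆ * c + b * ⁅a, c⁆ := by
  simp only [Ring.lie_def]; noncomm_ring

private lemma myMulLie {U : Type*} [Ring U] (a b c : U) :
    ⁅a * b, c⁆ = a * ⁅b, c⁆ + ⁅a, c⁆ * b := by
  simp only [Ring.lie_def]; noncomm_ring

theorem T_closed_under_bracket
    {U : Type*} [Ring U] [Algebra ℂ U] {S : Type*}
    (d : ℤ → U) (x : S → ℤ → U) (t : ℤ → U) (β : S → ℂ)
    (c : S → S → (S →₀ ℂ))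
    (hdd : ∀ m n : ℤ, ⁅d m, d n⁆ = ((n : ℂ) - (m : ℂ)) • d (m + n))
    (hdx : ∀ (i : ℤ) (s : S) (k : ℤ),
      ⁅d i, x s k⁆ = ((k : ℂ) + (i : ℂ) * β s) • x s (i + k))
    (hxx : ∀ (s p : S) (j k : ℤ),
      ⁅x s j, x p k⁆ = (c s p).sum fun q a => a • x q (j + k))
    (hdt : ∀ i k : ℤ, ⁅d i, t k⁆ = (k : ℂ) • t (i + k))
    (hxt : ∀ (s : S) (j k : ℤ), ⁅x s j, t k⁆ = 0)
    (htt : ∀ i j : ℤ, t i * t j = t (i + j))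
    (ht0 : t 0 = 1) :
    -- notation: T i := t (-i) * d i - d 0,  X s i := t (-i) * x s i
    (∀ i j : ℤ,
      ⁅t (-i) * d i - d 0, t (-j) * d j - d 0⁆ =
        (-(j : ℂ)) • (t (-j) * d j - d 0) +
          ((j : ℂ) - (i : ℂ)) • (t (-(i + j)) * d (i + j) - d 0) +
            (i : ℂ) • (t (-i) * d i - d 0)) ∧
    (∀ (i : ℤ) (s : S) (k : ℤ),
      ⁅t (-i) * d i - d 0, t (-k) * x s k⁆ =
        (-(k : ℂ)) • (t (-k) * x s k) +
          ((k : ℂ) + (i : ℂ) * β s) • (t (-(k + i)) * x s (k + i))) ∧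
    (∀ (s p : S) (i k : ℤ),
      ⁅t (-i) * x s i, t (-k) * x p k⁆ =
        t (-(i + k)) * ((c s p).sum fun q a => a • x q (i + k))) ∧
    (∀ u ∈ Submodule.span ℂ
        ((Set.range fun i : ℤ => t (-i) * d i - d 0) ∪
          (Set.range fun p : S × ℤ => t (-p.2) * x p.1 p.2)),
      ∀ v ∈ Submodule.span ℂ
        ((Set.range fun i : ℤ => t (-i) * d i - d 0) ∪
          (Set.range fun p : S × ℤ => t (-p.2) * x p.1 p.2)),
      ⁅u, v⁆ ∈ Submodule.span ℂ
        ((Set.range fun i : ℤ => t (-i) * d i - d 0) ∪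
          (Set.range fun p : S × ℤ => t (-p.2) * x p.1 p.2))) := by
  letI := LieRing.ofAssociativeRing (A := U)
  have htd : ∀ k m : ℤ, ⁅t k, d m⁆ = (-(k : ℂ)) • t (m + k) := by
    intro k m
    rw [← lie_skew, hdt, neg_smul]
  have htx : ∀ (k : ℤ) (s : S) (j : ℤ), ⁅t k, x s j⁆ = 0 := by
    intro k s j
    rw [← lie_skew, hxt, neg_zero]
  have httc : ∀ i j : ℤ, ⁅t i, t j⁆ = 0 := by
    intro i j
    simp [Ring.lie_def, htt, add_comm]
  have h1 : ∀ i j : ℤ,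
      ⁅t (-i) * d i - d 0, t (-j) * d j - d 0⁆ =
        (-(j : ℂ)) • (t (-j) * d j - d 0) +
          ((j : ℂ) - (i : ℂ)) • (t (-(i + j)) * d (i + j) - d 0) +
            (i : ℂ) • (t (-i) * d i - d 0) := by
    intro i j
    simp only [sub_lie, lie_sub, myMulLie, myLieMul, hdd, hdt, htd, httc]
    simp only [mul_add, add_mul, mul_sub, sub_mul, smul_mul_assoc, mul_smul_comm,
      ← mul_assoc, htt, ht0, zero_mul, mul_zero, one_mul, mul_one, smul_sub,
      smul_add, smul_smul]
    push_cast
    ring_nf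
    module
  have h2 : ∀ (i : ℤ) (s : S) (k : ℤ),
      ⁅t (-i) * d i - d 0, t (-k) * x s k⁆ =
        (-(k : ℂ)) • (t (-k) * x s k) +
          ((k : ℂ) + (i : ℂ) * β s) • (t (-(k + i)) * x s (k + i)) := by
    intro i s k
    simp only [sub_lie, lie_sub, myMulLie, myLieMul, hdx, hdt, htd, htx, httc]
    simp only [mul_add, add_mul, mul_sub, sub_mul, smul_mul_assoc, mul_smul_comm,
      ← mul_assoc, htt, ht0, zero_mul, mul_zero, one_mul, mul_one, smul_sub,
      smul_add, smul_smul, smul_zero, zero_smul, add_zero, zero_add]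
    have hik : i + k = k + i := add_comm i k
    rw [hik]
    push_cast
    ring_nf
    module
  have h3 : ∀ (s p : S) (i k : ℤ),
      ⁅t (-i) * x s i, t (-k) * x p k⁆ =
        t (-(i + k)) * ((c s p).sum fun q a => a • x q (i + k)) := by
    intro s p i k
    simp only [myMulLie, myLieMul, hxx, hxt, htx, httc]
    simp only [zero_mul, mul_zero, add_zero, zero_add, ← mul_assoc, htt]
    congr 1
    ring_nf
  refine ⟨h1, h2, h3, ?_⟩
  set G : Set U := (Set.range fun i : ℤ => t (-i) * d i - d 0) ∪
      (Set.range fun p : S × ℤ => t (-p.2) * x p.1 p.2) with hG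
  have key : ∀ a ∈ G, ∀ b ∈ G, ⁅a, b⁆ ∈ Submodule.span ℂ G := by
    rintro a (⟨i, rfl⟩ | ⟨⟨s, i⟩, rfl⟩) b (⟨j, rfl⟩ | ⟨⟨p, k⟩, rfl⟩)
    · rw [h1 i j]
      refine add_mem (add_mem (Submodule.smul_mem _ _ ?_) (Submodule.smul_mem _ _ ?_))
        (Submodule.smul_mem _ _ ?_) <;>
        exact Submodule.subset_span (Or.inl ⟨_, rfl⟩)
    · rw [h2 i p k]
      refine add_mem (Submodule.smul_mem _ _ ?_) (Submodule.smul_mem _ _ ?_) <;>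
        exact Submodule.subset_span (Or.inr ⟨(p, _), rfl⟩)
    · rw [← lie_skew]
      refine neg_mem ?_
      rw [h2 j s i]
      refine add_mem (Submodule.smul_mem _ _ ?_) (Submodule.smul_mem _ _ ?_) <;>
        exact Submodule.subset_span (Or.inr ⟨(s, _), rfl⟩)
    · rw [h3 s p i k, Finsupp.sum, Finset.mul_sum]
      refine Submodule.sum_mem _ fun q _ => ?_
      rw [mul_smul_comm]
      exact Submodule.smul_mem _ _ (Submodule.subset_span (Or.inr ⟨(q, i + k), rfl⟩))
  intro u hu v hv
  induction hu using Submodule.span_induction with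
  | mem a ha =>
    induction hv using Submodule.span_induction with
    | mem b hb => exact key a ha b hb
    | zero => simpa using Submodule.zero_mem _
    | add b1 b2 _ _ ih1 ih2 => rw [lie_add]; exact add_mem ih1 ih2
    | smul r b _ ih => rw [lie_smul]; exact Submodule.smul_mem _ _ ih
  | zero => simpa using Submodule.zero_mem _
  | add a1 a2 _ _ ih1 ih2 => rw [add_lie]; exact add_mem ih1 ih2
  | smul r a _ ih => rw [smul_lie]; exact Submodule.smul_mem _ _ ih
end

section
/- Let M be a cuspidal 𝔏-module on which all differentiators Ω_{k,p}^{(m)} = Σ_{i=0}^m (−1)^i C(m,i) d_{k−i} d_{p+i} act by zero (k, p ∈ ℤ). Then for every s with β_s ≠ 1 and all j, p ∈ ℤ, the operator Ω̄_{j,p,s}^{(m+2)} = Σ_{i=0}^{m+2} (−1)^i C(m+2,i) x_s(j−i) d_{p+i} annihilates M. -/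
/-!
STATEMENT 14: Let `M` be a cuspidal `𝔏`-module on which all differentiators
`Ω_{k,p}^{(m)} = Σ_{i=0}^m (−1)^i C(m,i) d_{k−i} d_{p+i}` act by zero.  Then
for every `s` with `β_s ≠ 1` and all `j, p ∈ ℤ`, the operator
`Ω̄_{j,p,s}^{(m+2)} = Σ_{i=0}^{m+2} (−1)^i C(m+2,i) x_s(j−i) d_{p+i}`
annihilates `M`.

The `𝔏`-module `M` is given by operators `ρd i` (action of `d_i`) and
`ρx s j` (action of `x_s(j)`) satisfying the defining relations; cuspidality:
`M` is the sum of the eigenspaces of `ρd 0` and their dimensions are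
uniformly bounded.
-/




lemma sum_pascal2 {E : Type*} [AddCommGroup E] [Module ℂ E] (n : ℕ) (g : ℤ → ℤ → E)
    (k p : ℤ) :
    ∑ i ∈ Finset.range (n + 1 + 1), ((-1 : ℂ) ^ i * ((n + 1).choose i : ℂ)) • g (k - i) (p + i)
    = (∑ i ∈ Finset.range (n + 1), ((-1 : ℂ) ^ i * (n.choose i : ℂ)) • g (k - i) (p + i))
      - ∑ i ∈ Finset.range (n + 1), ((-1 : ℂ) ^ i * (n.choose i : ℂ)) • g (k - 1 - i) (p + 1 + i) := by
  have hsplit : ∀ i : ℕ,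
      ((-1 : ℂ) ^ (i+1) * (((n + 1).choose (i+1)) : ℂ)) • g (k - (↑(i+1) : ℤ)) (p + ↑(i+1))
      = (-(((-1 : ℂ) ^ i * (n.choose i : ℂ)))) • g (k - 1 - i) (p + 1 + i)
        + ((-1 : ℂ) ^ (i+1) * ((n.choose (i+1) : ℕ) : ℂ)) • g (k - ↑(i+1)) (p + ↑(i+1)) := by
    intro i
    have harg1 : k - (↑(i+1) : ℤ) = k - 1 - i := by push_cast; ring
    have harg2 : p + (↑(i+1) : ℤ) = p + 1 + i := by push_cast; ring
    rw [harg1, harg2, Nat.choose_succ_succ]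
    push_cast
    match_scalars <;> ring
  rw [Finset.sum_range_succ'
    (fun i => ((-1 : ℂ) ^ i * ((n + 1).choose i : ℂ)) • g (k - i) (p + i)) (n + 1)]
  simp only [hsplit]
  rw [Finset.sum_add_distrib]
  have h2 : ∑ i ∈ Finset.range (n + 1),
      ((-1 : ℂ) ^ (i+1) * ((n.choose (i+1) : ℕ) : ℂ)) • g (k - ↑(i+1)) (p + ↑(i+1))
      = (∑ i ∈ Finset.range (n + 1), ((-1 : ℂ) ^ i * (n.choose i : ℂ)) • g (k - i) (p + i))
        - ((-1 : ℂ) ^ 0 * ((n.choose 0 : ℕ) : ℂ)) • g (k - (0:ℕ)) (p + (0:ℕ)) := by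
    rw [eq_sub_iff_add_eq,
      ← Finset.sum_range_succ' (fun i => ((-1 : ℂ) ^ i * (n.choose i : ℂ)) • g (k - i) (p + i)) (n+1),
      Finset.sum_range_succ]
    simp [Nat.choose_succ_self]
  rw [h2]
  simp only [neg_smul, Finset.sum_neg_distrib]
  simp only [pow_zero, Nat.choose_zero_right, Nat.cast_one, one_mul, one_smul, Nat.cast_zero,
    sub_zero, add_zero]
  abel

lemma lie_dd_expand {M : Type*} [AddCommGroup M] [Module ℂ M]
    (d x : ℤ → Module.End ℂ M) (b : ℂ)
    (hcomm : ∀ i c : ℤ, d i * x c = x c * d i + ((c : ℂ) + (i : ℂ) * b) • x (i + c))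
    (a k p u v w : ℤ) (hu : u = a + k) (hv : v = a + p) (hw : w = a + p + k) :
    ⁅x a, d k * d p⁆ =
      (-((a : ℂ) + (k : ℂ) * b)) • (x u * d p)
      + (-((a : ℂ) + (p : ℂ) * b)) • (x v * d k)
      + (-(((a : ℂ) + (p : ℂ) * b) * ((a : ℂ) + (p : ℂ) + (k : ℂ) * b))) • x w := by
  subst hu hv hw
  rw [Ring.lie_def, mul_assoc (d k) (d p) (x a), hcomm p a, mul_add,
    ← mul_assoc (d k) (x a) (d p), hcomm k a, mul_smul_comm, hcomm k (p + a),
    show k + a = a + k from by ring, show p + a = a + p from by ring,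
    show k + (a + p) = a + p + k from by ring,
    ← mul_assoc (x a) (d k) (d p), add_mul, smul_mul_assoc]
  match_scalars <;> push_cast <;> ring
theorem Omega_bar_annihilates {S : Type*} {M : Type*} [AddCommGroup M] [Module ℂ M]
    (β : S → ℂ) (c : S → S → (S →₀ ℂ))
    (ρd : ℤ → Module.End ℂ M) (ρx : S → ℤ → Module.End ℂ M)
    (hdd : ∀ i j : ℤ, ⁅ρd i, ρd j⁆ = ((j : ℂ) - (i : ℂ)) • ρd (i + j))
    (hdx : ∀ (i : ℤ) (s : S) (k : ℤ),
      ⁅ρd i, ρx s k⁆ = ((k : ℂ) + (i : ℂ) * β s) • ρx s (i + k))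
    (hxx : ∀ (s p : S) (j k : ℤ),
      ⁅ρx s j, ρx p k⁆ = ((c s p).sum fun q a => a • ρx q (j + k) : Module.End ℂ M))
    -- M is cuspidal (a uniformly bounded weight module for the d₀-action):
    (hwt : ⨆ μ : ℂ, Module.End.eigenspace (ρd 0) μ = ⊤)
    (hbdd : ∃ N : ℕ, ∀ μ : ℂ, Module.finrank ℂ (Module.End.eigenspace (ρd 0) μ) ≤ N)
    -- the differentiators annihilate M:
    (m : ℕ)
    (hOmega : ∀ k p : ℤ,
      (∑ i ∈ Finset.range (m + 1),
        ((-1 : ℂ) ^ i * (m.choose i : ℂ)) • (ρd (k - i) * ρd (p + i))) = 0) :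
    ∀ (s : S), β s ≠ 1 → ∀ j p : ℤ,
      (∑ i ∈ Finset.range (m + 2 + 1),
        ((-1 : ℂ) ^ i * ((m + 2).choose i : ℂ)) • (ρx s (j - i) * ρd (p + i))) = 0 := by
  intro s hs j p
  -- the commutation relation in multiplicative form
  have hcomm : ∀ i b : ℤ, ρd i * ρx s b
      = ρx s b * ρd i + ((b : ℂ) + (i : ℂ) * β s) • ρx s (i + b) := by
    intro i b
    have h := hdx i s b
    rw [Ring.lie_def, sub_eq_iff_eq_add] at h
    rw [h, add_comm]
  have hexp := lie_dd_expand ρd (ρx s) (β s) hcomm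
  -- bracketing x_s(a) against the (vanishing) differentiators
  have hΨ : ∀ a k p : ℤ,
      ∑ i ∈ Finset.range (m + 1),
        ((-1 : ℂ) ^ i * (m.choose i : ℂ)) • ⁅ρx s a, ρd (k - i) * ρd (p + i)⁆ = 0 := by
    intro a k p
    have : (∑ i ∈ Finset.range (m + 1),
        ((-1 : ℂ) ^ i * (m.choose i : ℂ)) • ⁅ρx s a, ρd (k - i) * ρd (p + i)⁆)
        = ⁅ρx s a, ∑ i ∈ Finset.range (m + 1),
            ((-1 : ℂ) ^ i * (m.choose i : ℂ)) • (ρd (k - i) * ρd (p + i))⁆ := by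
      rw [Ring.lie_def, Finset.mul_sum, Finset.sum_mul, ← Finset.sum_sub_distrib]
      refine Finset.sum_congr rfl fun i _ => ?_
      rw [Ring.lie_def, mul_smul_comm, smul_mul_assoc, smul_sub]
    rw [this, hOmega, Ring.lie_def, mul_zero, zero_mul, sub_zero]
  -- the key cancellation: second difference of the x-d sums, scaled by β s - 1, vanishes
  have hBB : ∀ K P : ℤ,
      (∑ i ∈ Finset.range (m + 1),
        ((-1 : ℂ) ^ i * (m.choose i : ℂ)) • (ρx s (K - i) * ρd (P + i)))
      - (2 : ℂ) • (∑ i ∈ Finset.range (m + 1),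
        ((-1 : ℂ) ^ i * (m.choose i : ℂ)) • (ρx s (K - 1 - i) * ρd (P + 1 + i)))
      + (∑ i ∈ Finset.range (m + 1),
        ((-1 : ℂ) ^ i * (m.choose i : ℂ)) • (ρx s (K - 2 - i) * ρd (P + 2 + i))) = 0 := by
    intro K P
    have key : (β s - 1) •
        ((∑ i ∈ Finset.range (m + 1),
          ((-1 : ℂ) ^ i * (m.choose i : ℂ)) • (ρx s (K - i) * ρd (P + i)))
        - (2 : ℂ) • (∑ i ∈ Finset.range (m + 1),
          ((-1 : ℂ) ^ i * (m.choose i : ℂ)) • (ρx s (K - 1 - i) * ρd (P + 1 + i)))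
        + (∑ i ∈ Finset.range (m + 1),
          ((-1 : ℂ) ^ i * (m.choose i : ℂ)) • (ρx s (K - 2 - i) * ρd (P + 2 + i))))
        = (∑ i ∈ Finset.range (m + 1),
            ((-1 : ℂ) ^ i * (m.choose i : ℂ)) • ⁅ρx s 1, ρd (K - 1 - i) * ρd (P + i)⁆)
          - (2 : ℂ) • (∑ i ∈ Finset.range (m + 1),
            ((-1 : ℂ) ^ i * (m.choose i : ℂ)) • ⁅ρx s 0, ρd (K - 1 - i) * ρd (P + 1 + i)⁆)
          + (∑ i ∈ Finset.range (m + 1),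
            ((-1 : ℂ) ^ i * (m.choose i : ℂ)) • ⁅ρx s (-1), ρd (K - 1 - i) * ρd (P + 2 + i)⁆)
          - (∑ i ∈ Finset.range (m + 1),
            ((-1 : ℂ) ^ i * (m.choose i : ℂ)) • ⁅ρx s 0, ρd (K - i) * ρd (P + i)⁆)
          + (2 : ℂ) • (∑ i ∈ Finset.range (m + 1),
            ((-1 : ℂ) ^ i * (m.choose i : ℂ)) • ⁅ρx s (-1), ρd (K - i) * ρd (P + 1 + i)⁆)
          - (∑ i ∈ Finset.range (m + 1),
            ((-1 : ℂ) ^ i * (m.choose i : ℂ)) • ⁅ρx s (-2), ρd (K - i) * ρd (P + 2 + i)⁆) := by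
      simp only [Finset.smul_sum, ← Finset.sum_sub_distrib, ← Finset.sum_add_distrib]
      refine Finset.sum_congr rfl fun i _ => ?_
      rw [hexp 1 (K - 1 - i) (P + i) (K - i) (P + i + 1) (K + P)
            (by ring) (by ring) (by ring),
          hexp 0 (K - 1 - i) (P + 1 + i) (K - 1 - i) (P + i + 1) (K + P)
            (by ring) (by ring) (by ring),
          hexp (-1) (K - 1 - i) (P + 2 + i) (K - 2 - i) (P + i + 1) (K + P)
            (by ring) (by ring) (by ring),
          hexp 0 (K - i) (P + i) (K - i) (P + i) (K + P)
            (by ring) (by ring) (by ring),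
          hexp (-1) (K - i) (P + 1 + i) (K - 1 - i) (P + i) (K + P)
            (by ring) (by ring) (by ring),
          hexp (-2) (K - i) (P + 2 + i) (K - 2 - i) (P + i) (K + P)
            (by ring) (by ring) (by ring)]
      match_scalars <;> push_cast <;> ring
    rw [hΨ 1 (K - 1) P, hΨ 0 (K - 1) (P + 1), hΨ (-1) (K - 1) (P + 2), hΨ 0 K P,
      hΨ (-1) K (P + 1), hΨ (-2) K (P + 2)] at key
    · simp only [smul_zero, sub_zero, add_zero, zero_sub, neg_zero, zero_add] at key
      rcases smul_eq_zero.mp key with h | h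
      · exact absurd (sub_eq_zero.mp h) hs
      · exact h
  have e1 := sum_pascal2 (m + 1) (fun K P => ρx s K * ρd P) j p
  have e2 := sum_pascal2 m (fun K P => ρx s K * ρd P) j p
  have e3 := sum_pascal2 m (fun K P => ρx s K * ρd P) (j - 1) (p + 1)
  rw [show m + 1 + 1 = m + 2 from rfl] at e1
  rw [show j - 1 - 1 = j - 2 from by ring, show p + 1 + 1 = p + 2 from by ring] at e3
  rw [e1, e2, e3]
  linear_combination (norm := module) hBB j p
end

section
/- Let 𝔤̂ = ℂd ⋉ 𝔤 where 𝔤 = ℂx + ℂy is the Lie superalgebra with x even, y odd, [x,y] = y, [y,y] = 0, [d,x] = 0, [d,y] = −(1/2)y. Then every finite dimensional simple 𝔤̂-module is 1-dimensional and y acts trivially on it. -/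
/-!
STATEMENT 18: Let `𝔤̂ = ℂd ⋉ 𝔤` where `𝔤 = ℂx + ℂy` is the Lie superalgebra
with `x` even, `y` odd, `[x,y] = y`, `[y,y] = 0`, `[d,x] = 0`,
`[d,y] = −(1/2)y`.  Then every finite dimensional simple (ℤ₂-graded)
`𝔤̂`-module is 1-dimensional, and `y` acts trivially on it.

Model: a finite dimensional ℤ₂-graded module `V = V₀ ⊕ V₁` with even
operators `D, X` (the actions of `d, x`) and an odd operator `Y` (the action
of `y`), subject to the relations `[D,X] = 0`, `[D,Y] = −(1/2)Y`,
`[X,Y] = Y` and `Y² = 0` (the latter is `[y,y] = 0`, since the super bracket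
`[y,y]` acts as `2Y²`).  Simplicity: `V ≠ 0` and the only graded subspaces
invariant under `D, X, Y` are `⊥` and `⊤`.
-/

theorem simple_module_qhat {V : Type*} [AddCommGroup V] [Module ℂ V]
    [FiniteDimensional ℂ V] [Nontrivial V]
    (V0 V1 : Submodule ℂ V) (hgr : V0 ⊔ V1 = ⊤) (hdisj : V0 ⊓ V1 = ⊥)
    (D X Y : Module.End ℂ V)
    -- D and X are even, Y is odd:
    (hD0 : ∀ v ∈ V0, D v ∈ V0) (hD1 : ∀ v ∈ V1, D v ∈ V1)
    (hX0 : ∀ v ∈ V0, X v ∈ V0) (hX1 : ∀ v ∈ V1, X v ∈ V1)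
    (hY0 : ∀ v ∈ V0, Y v ∈ V1) (hY1 : ∀ v ∈ V1, Y v ∈ V0)
    -- the defining relations of 𝔤̂:
    (hDX : ⁅D, X⁆ = 0)
    (hDY : ⁅D, Y⁆ = -(1 / 2 : ℂ) • Y)
    (hXY : ⁅X, Y⁆ = Y)
    (hYY : Y * Y = 0)
    -- simplicity: no proper nonzero graded submodule
    (hsimple : ∀ W : Submodule ℂ V,
      (∀ v ∈ W, D v ∈ W) → (∀ v ∈ W, X v ∈ W) → (∀ v ∈ W, Y v ∈ W) →
      W = (W ⊓ V0) ⊔ (W ⊓ V1) → W = ⊥ ∨ W = ⊤) :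
    Module.finrank ℂ V = 1 ∧ Y = 0 := by
  classical
  have lie_apply : ∀ (A B : Module.End ℂ V) (v : V), ⁅A, B⁆ v = A (B v) - B (A v) := by
    intro A B v; simp [Ring.lie_def, Module.End.mul_apply]
  -- Step 1: Y = 0
  have hYeq : Y = 0 := by
    set K := LinearMap.ker Y with hK
    have hKD : ∀ v ∈ K, D v ∈ K := by
      intro v hv
      have hv' : Y v = 0 := hv
      have h := congrArg (fun f : Module.End ℂ V => f v) hDY
      simp only [lie_apply, LinearMap.smul_apply, LinearMap.neg_apply] at h
      rw [hv'] at h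
      have : Y (D v) = 0 := by
        have h' : D 0 - Y (D v) = -(1 / 2 : ℂ) • (0 : V) := by simpa using h
        simpa using h'.symm
      exact this
    have hKX : ∀ v ∈ K, X v ∈ K := by
      intro v hv
      have hv' : Y v = 0 := hv
      have h := congrArg (fun f : Module.End ℂ V => f v) hXY
      simp only [lie_apply] at h
      rw [hv'] at h
      have : Y (X v) = 0 := by simpa using h
      exact this
    have hKY : ∀ v ∈ K, Y v ∈ K := by
      intro v hv
      show Y (Y v) = 0
      have h := congrArg (fun f : Module.End ℂ V => f v) hYY
      simpa [Module.End.mul_apply] using h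
    have hKgr : K = (K ⊓ V0) ⊔ (K ⊓ V1) := by
      refine le_antisymm ?_ (sup_le inf_le_left inf_le_left)
      intro v hv
      obtain ⟨v0, hv0, v1, hv1, hsum⟩ : ∃ v0 ∈ V0, ∃ v1 ∈ V1, v0 + v1 = v :=
        Submodule.mem_sup.mp (by rw [hgr]; trivial)
      have hzero : Y v0 + Y v1 = 0 := by
        have : Y (v0 + v1) = 0 := by rw [hsum]; exact hv
        simpa [map_add] using this
      have hneg : Y v0 = -Y v1 := eq_neg_of_add_eq_zero_left hzero
      have hY0z : Y v0 = 0 := by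
        have : Y v0 ∈ V0 ⊓ V1 := ⟨hneg ▸ Submodule.neg_mem _ (hY1 v1 hv1), hY0 v0 hv0⟩
        rw [hdisj] at this
        exact this
      have hY1z : Y v1 = 0 := by
        have := hzero; rw [hY0z] at this; simpa using this
      rw [← hsum]
      exact Submodule.add_mem_sup ⟨hY0z, hv0⟩ ⟨hY1z, hv1⟩
    rcases hsimple K hKD hKX hKY hKgr with hbot | htop
    · -- Y is injective, but Y² = 0, contradiction with Nontrivial
      exfalso
      have hYzero : Y = 0 := by
        ext v
        have : Y v ∈ K := by
          show Y (Y v) = 0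
          have h := congrArg (fun f : Module.End ℂ V => f v) hYY
          simpa [Module.End.mul_apply] using h
        rw [hbot] at this
        simpa using this
      have : K = ⊤ := by rw [hK, hYzero]; exact LinearMap.ker_zero
      rw [hbot] at this
      exact absurd this.symm (by simp)
    · exact LinearMap.ker_eq_top.mp htop
  have hY0' : ∀ v : V, Y v = 0 := by intro v; rw [hYeq]; rfl
  -- Step 2: one of V0, V1 is ⊤, hence the grading condition is automatic
  have hVi : V0 = ⊤ ∨ V1 = ⊤ := by
    have hV0gr : V0 = (V0 ⊓ V0) ⊔ (V0 ⊓ V1) := by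
      rw [inf_idem]
      exact (sup_eq_left.mpr inf_le_left).symm
    rcases hsimple V0 hD0 hX0 (fun v hv => hY0' v ▸ Submodule.zero_mem V0) hV0gr with h | h
    · right
      rw [← hgr, h, bot_sup_eq]
    · exact Or.inl h
  have hgraded : ∀ W : Submodule ℂ V, W = (W ⊓ V0) ⊔ (W ⊓ V1) := by
    intro W
    rcases hVi with h | h
    · rw [h, inf_top_eq]; exact (sup_eq_left.mpr inf_le_left).symm
    · rw [h, inf_top_eq]; exact (sup_eq_right.mpr inf_le_left).symm
  have hsimple' : ∀ W : Submodule ℂ V,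
      (∀ v ∈ W, D v ∈ W) → (∀ v ∈ W, X v ∈ W) → W = ⊥ ∨ W = ⊤ := by
    intro W hWD hWX
    exact hsimple W hWD hWX (fun v hv => hY0' v ▸ Submodule.zero_mem W) (hgraded W)
  -- Step 3: D is a scalar
  obtain ⟨μ, hμ⟩ := Module.End.exists_eigenvalue D
  have hDcomm : D * X = X * D := by
    have := hDX
    rw [Ring.lie_def, sub_eq_zero] at this
    exact this
  have hDscal : ∀ v : V, D v = μ • v := by
    set E := Module.End.eigenspace D μ with hE
    have hED : ∀ v ∈ E, D v ∈ E := by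
      intro v hv
      rw [Module.End.mem_eigenspace_iff] at hv ⊢
      rw [hv, map_smul, hv]
    have hEX : ∀ v ∈ E, X v ∈ E := by
      intro v hv
      rw [Module.End.mem_eigenspace_iff] at hv ⊢
      have : D (X v) = X (D v) := by
        have h := congrArg (fun f : Module.End ℂ V => f v) hDcomm
        simpa [Module.End.mul_apply] using h
      rw [this, hv, map_smul]
    rcases hsimple' E hED hEX with h | h
    · exact absurd h (Module.End.hasEigenvalue_iff.mp hμ)
    · intro v
      have : v ∈ E := by rw [h]; trivial
      exact Module.End.mem_eigenspace_iff.mp this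
  -- Step 4: X is a scalar
  obtain ⟨ν, hν⟩ := Module.End.exists_eigenvalue X
  have hXscal : ∀ v : V, X v = ν • v := by
    set E := Module.End.eigenspace X ν with hE
    have hEX : ∀ v ∈ E, X v ∈ E := by
      intro v hv
      rw [Module.End.mem_eigenspace_iff] at hv ⊢
      rw [hv, map_smul, hv]
    have hED : ∀ v ∈ E, D v ∈ E := by
      intro v hv
      rw [Module.End.mem_eigenspace_iff] at hv ⊢
      rw [hDscal v, map_smul, hv, smul_comm]
    rcases hsimple' E hED hEX with h | h
    · exact absurd h (Module.End.hasEigenvalue_iff.mp hν)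
    · intro v
      have : v ∈ E := by rw [h]; trivial
      exact Module.End.mem_eigenspace_iff.mp this
  -- Step 5: any 1-dim span is everything
  obtain ⟨v, hv⟩ := exists_ne (0 : V)
  set W := Submodule.span ℂ {v} with hW
  have hWD : ∀ w ∈ W, D w ∈ W := fun w hw => by
    rw [hDscal w]; exact Submodule.smul_mem W μ hw
  have hWX : ∀ w ∈ W, X w ∈ W := fun w hw => by
    rw [hXscal w]; exact Submodule.smul_mem W ν hw
  rcases hsimple' W hWD hWX with h | h
  · exfalso
    apply hv
    have : v ∈ W := Submodule.mem_span_singleton_self v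
    rw [h] at this
    simpa using this
  · constructor
    · rw [← finrank_top ℂ V, ← h, hW, finrank_span_singleton hv]
    · exact hYeq
end
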